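/- A pair (d, D) of linear maps on V is a biderivation of the Leibniz algebra L₁₉ if and only if there exist complex numbers a, b, m, m', p, q, r, s, u, v, w, z such that d(e₁) = a·e₁ + p·e₃ + q·e₄, d(e₂) = m·e₁ + b·e₂ + r·e₃ + s·e₄, d(e₃) = 2b·e₃ + m·e₄, d(e₄) = (a+b)·e₄, D(e₁) = u·e₃ + v·e₄, D(e₂) = m'·e₁ + b·e₂ + w·e₃ + z·e₄, and D(e₃) = D(e₄) = 0. Consequently, the space of biderivations of L₁₉ is a 12-dimensional linear subspace of End(V) × End(V). -/
import Mathlib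

/-- `V = ℂ⁴`. -/
abbrev V : Type := Fin 4 → ℂ

/-- standard basis: `e 0 = e₁`, ..., `e 3 = e₄`. -/
def e (i : Fin 4) : V := Pi.single i 1

/-- Bracket of the Leibniz algebra `L₁₉`:
`⟦e₂,e₁⟧ = e₄`, `⟦e₂,e₂⟧ = e₃`, all other basis products zero. -/
def br (x y : V) : V :=
  (x 1 * y 1) • e 2 + (x 1 * y 0) • e 3

/-- A derivation. -/
def IsDer (d : V →ₗ[ℂ] V) : Prop :=
  ∀ x y : V, d (br x y) = br (d x) y + br x (d y)

/-- An antiderivation. -/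
def IsAntiDer (D : V →ₗ[ℂ] V) : Prop :=
  ∀ x y : V, D (br x y) = br x (D y) - br y (D x)

/-- A biderivation: a pair of a derivation and an antiderivation satisfying
`⟦d(x),y⟧ = ⟦D(x),y⟧` for all `x, y`. -/
def IsBider (d D : V →ₗ[ℂ] V) : Prop :=
  IsDer d ∧ IsAntiDer D ∧ ∀ x y : V, br (d x) y = br (D x) y

lemma e_apply (i j : Fin 4) : e i j = if j = i then 1 else 0 := by
  simp [e, Pi.single_apply]

lemma decomp (x : V) : x = x 0 • e 0 + x 1 • e 1 + x 2 • e 2 + x 3 • e 3 := by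
  funext j; fin_cases j <;> simp [e_apply]

lemma map_x (f : V →ₗ[ℂ] V) (x : V) :
    f x = x 0 • f (e 0) + x 1 • f (e 1) + x 2 • f (e 2) + x 3 • f (e 3) := by
  conv_lhs => rw [decomp x]
  simp

lemma ext_of_basis {f g : V →ₗ[ℂ] V} (h : ∀ i, f (e i) = g (e i)) : f = g := by
  refine LinearMap.ext fun x => ?_
  rw [map_x f, map_x g, h 0, h 1, h 2, h 3]

lemma br_add_left (x x' y : V) : br (x + x') y = br x y + br x' y := by
  funext i; fin_cases i <;> simp [br, e_apply] <;> ring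

lemma br_add_right (x y y' : V) : br x (y + y') = br x y + br x y' := by
  funext i; fin_cases i <;> simp [br, e_apply] <;> ring

lemma br_smul_left (c : ℂ) (x y : V) : br (c • x) y = c • br x y := by
  funext i; fin_cases i <;> simp [br, e_apply] <;> ring

lemma br_smul_right (c : ℂ) (x y : V) : br x (c • y) = c • br x y := by
  funext i; fin_cases i <;> simp [br, e_apply] <;> ring

lemma isDer_of (d : V →ₗ[ℂ] V) (a b m p q r s : ℂ)
    (h0 : d (e 0) = a • e 0 + p • e 2 + q • e 3)
    (h1 : d (e 1) = m • e 0 + b • e 1 + r • e 2 + s • e 3)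
    (h2 : d (e 2) = (2 * b) • e 2 + m • e 3)
    (h3 : d (e 3) = (a + b) • e 3) : IsDer d := by
  intro x y
  rw [show br x y = (x 1 * y 1) • e 2 + (x 1 * y 0) • e 3 from rfl, map_add, map_smul, map_smul,
    h2, h3, map_x d x, map_x d y, h0, h1, h2, h3]
  funext i
  fin_cases i <;> simp [br, e_apply] <;> ring

lemma isAntiDer_of (D : V →ₗ[ℂ] V) (b m' u v w z : ℂ)
    (h0 : D (e 0) = u • e 2 + v • e 3)
    (h1 : D (e 1) = m' • e 0 + b • e 1 + w • e 2 + z • e 3)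
    (h2 : D (e 2) = 0)
    (h3 : D (e 3) = 0) : IsAntiDer D := by
  intro x y
  rw [show br x y = (x 1 * y 1) • e 2 + (x 1 * y 0) • e 3 from rfl, map_add, map_smul, map_smul,
    h2, h3, map_x D x, map_x D y, h0, h1, h2, h3]
  funext i
  fin_cases i <;> simp [br, e_apply] <;> ring

lemma compat_of (d D : V →ₗ[ℂ] V) (a b m m' p q r s u v w z : ℂ)
    (h0 : d (e 0) = a • e 0 + p • e 2 + q • e 3)
    (h1 : d (e 1) = m • e 0 + b • e 1 + r • e 2 + s • e 3)
    (h2 : d (e 2) = (2 * b) • e 2 + m • e 3)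
    (h3 : d (e 3) = (a + b) • e 3)
    (g0 : D (e 0) = u • e 2 + v • e 3)
    (g1 : D (e 1) = m' • e 0 + b • e 1 + w • e 2 + z • e 3)
    (g2 : D (e 2) = 0)
    (g3 : D (e 3) = 0) :
    ∀ x y : V, br (d x) y = br (D x) y := by
  intro x y
  have h : (d x) 1 = (D x) 1 := by
    rw [map_x d x, map_x D x, h0, h1, h2, h3, g0, g1, g2, g3]
    simp [e_apply]
  unfold br
  rw [h]

/-- The key characterization (one half of the theorem). -/
lemma bider_iff (d D : V →ₗ[ℂ] V) : IsBider d D ↔ ∃ a b m m' p q r s u v w z : ℂ,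
      d (e 0) = a • e 0 + p • e 2 + q • e 3 ∧
      d (e 1) = m • e 0 + b • e 1 + r • e 2 + s • e 3 ∧
      d (e 2) = (2 * b) • e 2 + m • e 3 ∧
      d (e 3) = (a + b) • e 3 ∧
      D (e 0) = u • e 2 + v • e 3 ∧
      D (e 1) = m' • e 0 + b • e 1 + w • e 2 + z • e 3 ∧
      D (e 2) = 0 ∧ D (e 3) = 0 := by
  constructor
  · rintro ⟨hd, hD, hc⟩
    have hbr11 : br (e 1) (e 1) = e 2 := by
      funext i; fin_cases i <;> simp [br, e_apply]
    have hbr10 : br (e 1) (e 0) = e 3 := by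
      funext i; fin_cases i <;> simp [br, e_apply]
    have hbr01 : br (e 0) (e 1) = (0 : V) := by
      funext i; fin_cases i <;> simp [br, e_apply]
    -- d (e 0) 1 = 0
    have h01 : d (e 0) 1 = 0 := by
      have h := congrFun (hd (e 0) (e 1)) 2
      rw [hbr01] at h
      simpa [br, e_apply] using h.symm
    -- D (e 0) 0 = 0 and D (e 0) 1 = 0
    have g00 : D (e 0) 0 = 0 := by
      have h := congrFun (hD (e 0) (e 1)) 3
      rw [hbr01] at h
      simpa [br, e_apply] using h.symm
    have g01 : D (e 0) 1 = 0 := by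
      have h := congrFun (hD (e 0) (e 1)) 2
      rw [hbr01] at h
      simpa [br, e_apply] using h.symm
    -- D (e 1) 1 = d (e 1) 1
    have g11 : D (e 1) 1 = d (e 1) 1 := by
      have h := congrFun (hc (e 1) (e 1)) 2
      simpa [br, e_apply] using h.symm
    refine ⟨d (e 0) 0, d (e 1) 1, d (e 1) 0, D (e 1) 0, d (e 0) 2, d (e 0) 3,
      d (e 1) 2, d (e 1) 3, D (e 0) 2, D (e 0) 3, D (e 1) 2, D (e 1) 3,
      ?_, ?_, ?_, ?_, ?_, ?_, ?_, ?_⟩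
    · funext i; fin_cases i <;> simp [e_apply, h01]
    · funext i; fin_cases i <;> simp [e_apply]
    · have h := hd (e 1) (e 1)
      rw [hbr11] at h
      rw [h]
      funext i; fin_cases i <;> simp [br, e_apply] <;> ring
    · have h := hd (e 1) (e 0)
      rw [hbr10] at h
      rw [h]
      funext i; fin_cases i <;> simp [br, e_apply, h01] <;> ring
    · funext i; fin_cases i <;> simp [e_apply, g00, g01]
    · funext i; fin_cases i <;> simp [e_apply, g11]
    · have h := hD (e 1) (e 1)
      rw [hbr11] at h
      simpa using h
    · have h := hD (e 1) (e 0)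
      rw [hbr10] at h
      rw [h]
      funext i; fin_cases i <;> simp [br, e_apply, g00, g01]
  · rintro ⟨a, b, m, m', p, q, r, s, u, v, w, z, h0, h1, h2, h3, g0, g1, g2, g3⟩
    exact ⟨isDer_of d a b m p q r s h0 h1 h2 h3,
      isAntiDer_of D b m' u v w z g0 g1 g2 g3,
      compat_of d D a b m m' p q r s u v w z h0 h1 h2 h3 g0 g1 g2 g3⟩

/-- the pair of maps with the given parameters. -/
noncomputable def mk (c : Fin 12 → ℂ) : (V →ₗ[ℂ] V) × (V →ₗ[ℂ] V) :=
  (Matrix.mulVecLin !![c 0, c 2, 0, 0; 0, c 1, 0, 0; c 4, c 6, 2 * c 1, 0;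
      c 5, c 7, c 2, c 0 + c 1],
   Matrix.mulVecLin !![0, c 3, 0, 0; 0, c 1, 0, 0; c 8, c 10, 0, 0; c 9, c 11, 0, 0])

lemma mulVecLin_e (M : Matrix (Fin 4) (Fin 4) ℂ) (j : Fin 4) :
    Matrix.mulVecLin M (e j) = fun i => M i j := by
  funext i
  simp [e, Matrix.mulVecLin_apply, Matrix.mulVec_single]

lemma mk_spec (c : Fin 12 → ℂ) :
    (mk c).1 (e 0) = c 0 • e 0 + c 4 • e 2 + c 5 • e 3 ∧
    (mk c).1 (e 1) = c 2 • e 0 + c 1 • e 1 + c 6 • e 2 + c 7 • e 3 ∧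
    (mk c).1 (e 2) = (2 * c 1) • e 2 + c 2 • e 3 ∧
    (mk c).1 (e 3) = (c 0 + c 1) • e 3 ∧
    (mk c).2 (e 0) = c 8 • e 2 + c 9 • e 3 ∧
    (mk c).2 (e 1) = c 3 • e 0 + c 1 • e 1 + c 10 • e 2 + c 11 • e 3 ∧
    (mk c).2 (e 2) = 0 ∧ (mk c).2 (e 3) = 0 := by
  refine ⟨?_, ?_, ?_, ?_, ?_, ?_, ?_, ?_⟩ <;>
    · rw [mk, mulVecLin_e]
      funext i; fin_cases i <;> simp [e_apply, Matrix.vecHead, Matrix.vecTail]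

/-- coordinates of a pair of maps -/
noncomputable def coords : ((V →ₗ[ℂ] V) × (V →ₗ[ℂ] V)) →ₗ[ℂ] (Fin 12 → ℂ) where
  toFun P := ![P.1 (e 0) 0, P.1 (e 1) 1, P.1 (e 1) 0, P.2 (e 1) 0,
    P.1 (e 0) 2, P.1 (e 0) 3, P.1 (e 1) 2, P.1 (e 1) 3,
    P.2 (e 0) 2, P.2 (e 0) 3, P.2 (e 1) 2, P.2 (e 1) 3]
  map_add' P Q := by funext i; fin_cases i <;> rfl
  map_smul' cc P := by funext i; fin_cases i <;> rfl


noncomputable def Sbider : Submodule ℂ ((V →ₗ[ℂ] V) × (V →ₗ[ℂ] V)) where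
  carrier := {p | IsBider p.1 p.2}
  add_mem' := by
    rintro P Q ⟨hP1, hP2, hP3⟩ ⟨hQ1, hQ2, hQ3⟩
    refine ⟨fun x y => ?_, fun x y => ?_, fun x y => ?_⟩
    · simp only [Prod.fst_add, LinearMap.add_apply, hP1 x y, hQ1 x y,
        br_add_left, br_add_right]
      abel
    · simp only [Prod.snd_add, LinearMap.add_apply, hP2 x y, hQ2 x y,
        br_add_left, br_add_right]
      abel
    · simp only [Prod.fst_add, Prod.snd_add, LinearMap.add_apply,
        br_add_left, hP3 x y, hQ3 x y]
  zero_mem' := by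
    refine ⟨fun x y => ?_, fun x y => ?_, fun x y => ?_⟩ <;>
      · funext i; fin_cases i <;> simp [br, e_apply]
  smul_mem' := by
    rintro c P ⟨hP1, hP2, hP3⟩
    refine ⟨fun x y => ?_, fun x y => ?_, fun x y => ?_⟩
    · simp only [Prod.smul_fst, LinearMap.smul_apply, hP1 x y,
        br_smul_left, br_smul_right, smul_add]
    · simp only [Prod.smul_snd, LinearMap.smul_apply, hP2 x y,
        br_smul_left, br_smul_right, smul_sub]
    · simp only [Prod.smul_fst, Prod.smul_snd, LinearMap.smul_apply,
        br_smul_left, hP3 x y]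

noncomputable def restr : Sbider →ₗ[ℂ] (Fin 12 → ℂ) := coords.comp Sbider.subtype

lemma coords_val (P : (V →ₗ[ℂ] V) × (V →ₗ[ℂ] V)) :
    coords P = ![P.1 (e 0) 0, P.1 (e 1) 1, P.1 (e 1) 0, P.2 (e 1) 0,
      P.1 (e 0) 2, P.1 (e 0) 3, P.1 (e 1) 2, P.1 (e 1) 3,
      P.2 (e 0) 2, P.2 (e 0) 3, P.2 (e 1) 2, P.2 (e 1) 3] := rfl

lemma restr_bijective : Function.Bijective restr := by
  constructor
  · have hker : ∀ P : Sbider, restr P = 0 → P = 0 := by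
      rintro ⟨P, hP⟩ h
      have hc : coords P = 0 := h
      obtain ⟨a, b, m, m', p, q, r, s, u, v, w, z, h0, h1, h2, h3, g0, g1, g2, g3⟩ :=
        (bider_iff P.1 P.2).mp hP
      have ha : a = P.1 (e 0) 0 := by
        have := congrFun h0 0; simp [e_apply] at this; rw [this]
      have hb : b = P.1 (e 1) 1 := by
        have := congrFun h1 1; simp [e_apply] at this; rw [this]
      have hm : m = P.1 (e 1) 0 := by
        have := congrFun h1 0; simp [e_apply] at this; rw [this]
      have hm' : m' = P.2 (e 1) 0 := by
        have := congrFun g1 0; simp [e_apply] at this; rw [this]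
      have hp : p = P.1 (e 0) 2 := by
        have := congrFun h0 2; simp [e_apply] at this; rw [this]
      have hq : q = P.1 (e 0) 3 := by
        have := congrFun h0 3; simp [e_apply] at this; rw [this]
      have hr : r = P.1 (e 1) 2 := by
        have := congrFun h1 2; simp [e_apply] at this; rw [this]
      have hs : s = P.1 (e 1) 3 := by
        have := congrFun h1 3; simp [e_apply] at this; rw [this]
      have hu : u = P.2 (e 0) 2 := by
        have := congrFun g0 2; simp [e_apply] at this; rw [this]
      have hv : v = P.2 (e 0) 3 := by
        have := congrFun g0 3; simp [e_apply] at this; rw [this]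
      have hw : w = P.2 (e 1) 2 := by
        have := congrFun g1 2; simp [e_apply] at this; rw [this]
      have hz : z = P.2 (e 1) 3 := by
        have := congrFun g1 3; simp [e_apply] at this; rw [this]
      rw [coords_val] at hc
      have c0 := congrFun hc 0
      have c1 := congrFun hc 1
      have c2 := congrFun hc 2
      have c3 := congrFun hc 3
      have c4 := congrFun hc 4
      have c5 := congrFun hc 5
      have c6 := congrFun hc 6
      have c7 := congrFun hc 7
      have c8 := congrFun hc 8
      have c9 := congrFun hc 9
      have c10 := congrFun hc 10
      have c11 := congrFun hc 11
      simp only [Matrix.cons_val_zero, Matrix.cons_val_one, Matrix.head_cons,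
        Pi.zero_apply] at c0 c1 c2 c3 c4 c5 c6 c7 c8 c9 c10 c11
      have e0 : a = 0 := by rw [ha]; exact c0
      have e1 : b = 0 := by rw [hb]; exact c1
      have e2' : m = 0 := by rw [hm]; exact c2
      have e3' : m' = 0 := by rw [hm']; exact c3
      have e4 : p = 0 := by rw [hp]; exact c4
      have e5 : q = 0 := by rw [hq]; exact c5
      have e6 : r = 0 := by rw [hr]; exact c6
      have e7 : s = 0 := by rw [hs]; exact c7
      have e8 : u = 0 := by rw [hu]; exact c8
      have e9 : v = 0 := by rw [hv]; exact c9
      have e10 : w = 0 := by rw [hw]; exact c10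
      have e11 : z = 0 := by rw [hz]; exact c11
      subst e0 e1 e2' e3' e4 e5 e6 e7 e8 e9 e10 e11
      simp only [zero_smul, add_zero, zero_add, mul_zero, smul_zero] at h0 h1 h2 h3 g0 g1
      have hP1 : P.1 = 0 := ext_of_basis fun i => by
        fin_cases i <;> simp [h0, h1, h2, h3]
      have hP2 : P.2 = 0 := ext_of_basis fun i => by
        fin_cases i <;> simp [g0, g1, g2, g3]
      exact Subtype.ext (Prod.ext hP1 hP2)
    intro P Q hPQ
    have h' : P - Q = 0 := hker _ (by rw [show restr (P - Q) = restr P - restr Q from map_sub restr P Q, hPQ, sub_self])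
    exact sub_eq_zero.mp h'
  · intro c
    obtain ⟨h0, h1, h2, h3, g0, g1, g2, g3⟩ := mk_spec c
    have hmem : mk c ∈ Sbider :=
      (bider_iff (mk c).1 (mk c).2).mpr
        ⟨c 0, c 1, c 2, c 3, c 4, c 5, c 6, c 7, c 8, c 9, c 10, c 11,
          h0, h1, h2, h3, g0, g1, g2, g3⟩
    refine ⟨⟨mk c, hmem⟩, ?_⟩
    show coords (mk c) = c
    rw [coords_val, h0, h1, g0, g1]
    funext i
    fin_cases i <;> (try simp [e_apply]) <;> rfl

theorem biderivations_of_L19 :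
    (∀ d D : V →ₗ[ℂ] V, IsBider d D ↔ ∃ a b m m' p q r s u v w z : ℂ,
      d (e 0) = a • e 0 + p • e 2 + q • e 3 ∧
      d (e 1) = m • e 0 + b • e 1 + r • e 2 + s • e 3 ∧
      d (e 2) = (2 * b) • e 2 + m • e 3 ∧
      d (e 3) = (a + b) • e 3 ∧
      D (e 0) = u • e 2 + v • e 3 ∧
      D (e 1) = m' • e 0 + b • e 1 + w • e 2 + z • e 3 ∧
      D (e 2) = 0 ∧ D (e 3) = 0) ∧
    ∃ S : Submodule ℂ ((V →ₗ[ℂ] V) × (V →ₗ[ℂ] V)),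
      (S : Set ((V →ₗ[ℂ] V) × (V →ₗ[ℂ] V))) = {p | IsBider p.1 p.2} ∧
      Module.finrank ℂ S = 12 := by
  refine ⟨bider_iff, Sbider, rfl, ?_⟩
  have E := LinearEquiv.ofBijective restr restr_bijective
  rw [E.finrank_eq]
  simp [Module.finrank_pi]
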